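/- Let B be an atomless Boolean algebra. Then for every x ∈ B with x ≠ 0 there exist y with 0 < y ≤ x and an infinite cardinal λ such that for every z with 0 < z ≤ y, the density of the relative algebra B ↾ z equals λ. -/

import Mathlib

/-- The density of the relative algebra `B ↾ x`: the least cardinality of a
set of nonzero elements `≤ x` that is dense below `x`. -/
noncomputable def dens {B : Type u} [BooleanAlgebra B] (x : B) : Cardinal.{u} :=
  sInf {c | ∃ D : Set B, (∀ d ∈ D, ⊥ < d ∧ d ≤ x) ∧
    (∀ z : B, ⊥ < z → z ≤ x → ∃ d ∈ D, d ≤ z) ∧ Cardinal.mk D = c}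

lemma dens_mem {B : Type u} [BooleanAlgebra B] (x : B) :
    ∃ D : Set B, (∀ d ∈ D, ⊥ < d ∧ d ≤ x) ∧
      (∀ z : B, ⊥ < z → z ≤ x → ∃ d ∈ D, d ≤ z) ∧ Cardinal.mk D = dens x := by
  have hne : {c | ∃ D : Set B, (∀ d ∈ D, ⊥ < d ∧ d ≤ x) ∧
      (∀ z : B, ⊥ < z → z ≤ x → ∃ d ∈ D, d ≤ z) ∧ Cardinal.mk D = c}.Nonempty :=
    ⟨_, {d | ⊥ < d ∧ d ≤ x}, fun d hd => hd,
      fun z hz hzx => ⟨z, ⟨hz, hzx⟩, le_rfl⟩, rfl⟩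
  exact csInf_mem hne

lemma dens_le {B : Type u} [BooleanAlgebra B] (x : B) (D : Set B)
    (h1 : ∀ d ∈ D, ⊥ < d ∧ d ≤ x) (h2 : ∀ z : B, ⊥ < z → z ≤ x → ∃ d ∈ D, d ≤ z) :
    dens x ≤ Cardinal.mk D :=
  csInf_le' ⟨D, h1, h2, rfl⟩

lemma dens_mono {B : Type u} [BooleanAlgebra B] {z y : B} (hzy : z ≤ y) :
    dens z ≤ dens y := by
  obtain ⟨D, h1, h2, hmk⟩ := dens_mem y
  have h1' : ∀ d ∈ {d ∈ D | d ≤ z}, ⊥ < d ∧ d ≤ z :=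
    fun d hd => ⟨(h1 d hd.1).1, hd.2⟩
  have h2' : ∀ w : B, ⊥ < w → w ≤ z → ∃ d ∈ {d ∈ D | d ≤ z}, d ≤ w := by
    intro w hw hwz
    obtain ⟨d, hd, hdw⟩ := h2 w hw (hwz.trans hzy)
    exact ⟨d, ⟨hd, hdw.trans hwz⟩, hdw⟩
  calc dens z ≤ Cardinal.mk {d ∈ D | d ≤ z} := dens_le z _ h1' h2'
    _ ≤ Cardinal.mk D := Cardinal.mk_le_mk_of_subset (Set.sep_subset _ _)
    _ = dens y := hmk

lemma aleph0_le_dens {B : Type u} [BooleanAlgebra B] (hatomless : ∀ a : B, ¬ IsAtom a)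
    {z : B} (hz : ⊥ < z) : Cardinal.aleph0 ≤ dens z := by
  obtain ⟨D, h1, h2, hmk⟩ := dens_mem z
  have hinf : D.Infinite := by
    intro hfin
    have hDne : D.Nonempty := by
      obtain ⟨d, hd, _⟩ := h2 z hz le_rfl
      exact ⟨d, hd⟩
    obtain ⟨d, hdD, hmin⟩ := Set.Finite.exists_minimalFor id D (Set.finite_coe_iff.mp hfin) hDne
    have hd0 : ⊥ < d := (h1 d hdD).1
    have : ∃ b : B, b < d ∧ b ≠ ⊥ := by
      by_contra h
      push_neg at h
      exact hatomless d ⟨hd0.ne', fun b hb => h b hb⟩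
    obtain ⟨b, hbd, hb0⟩ := this
    obtain ⟨e, heD, heb⟩ := h2 b hb0.bot_lt ((hbd.le).trans (h1 d hdD).2)
    have : d = e := le_antisymm (hmin heD (heb.trans hbd.le)) (heb.trans hbd.le)
    exact (lt_of_le_of_lt heb hbd).ne' this
  rw [← hmk, Cardinal.aleph0_le_mk_iff]
  exact Set.infinite_coe_iff.mpr hinf

/-- In an atomless Boolean algebra, below every nonzero `x` there are `y` and
an infinite cardinal `λ` such that every nonzero `z ≤ y` has
`density (B ↾ z) = λ`. -/
theorem stmt_10 {B : Type u} [BooleanAlgebra B] (hatomless : ∀ a : B, ¬ IsAtom a) :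
    ∀ x : B, x ≠ ⊥ → ∃ y : B, ⊥ < y ∧ y ≤ x ∧ ∃ lam : Cardinal.{u},
      Cardinal.aleph0 ≤ lam ∧ ∀ z : B, ⊥ < z → z ≤ y → dens z = lam := by
  intro x hx
  have hx0 : ⊥ < x := hx.bot_lt
  set S : Set Cardinal.{u} := {c | ∃ z : B, (⊥ < z ∧ z ≤ x) ∧ dens z = c} with hS
  have hSne : S.Nonempty := ⟨dens x, x, ⟨hx0, le_rfl⟩, rfl⟩
  obtain ⟨y, ⟨hy0, hyx⟩, hyd⟩ := csInf_mem hSne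
  refine ⟨y, hy0, hyx, sInf S, ?_, ?_⟩
  · exact (aleph0_le_dens hatomless hy0).trans_eq hyd
  · intro z hz hzy
    refine le_antisymm ((dens_mono hzy).trans_eq hyd) ?_
    exact csInf_le' ⟨z, ⟨hz, hzy.trans hyx⟩, rfl⟩
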